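/- Let ν be a self-joining of three copies of a measure-preserving automorphism T of (X, μ) (i.e. ν is a (T×T×T)-invariant probability measure on X³ with all three one-dimensional marginals equal to μ), and suppose the projection of ν onto each two-dimensional face equals μ ⊗ μ. If additionally ν is invariant under Id × Id × T^v for some v such that T^v is mixing (equivalently T^{nv} → Θ weakly), then ν = μ ⊗ μ ⊗ μ. -/

import Mathlib

open MeasureTheory Filter Set MeasurableSpace

section StmtAux

variable {α : Type*} [MeasurableSpace α] {μ : Measure α}

lemma stmt14_integrable_of_bound [IsFiniteMeasure μ] {f : α → ℝ} (hf : Measurable f)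
    (C : ℝ) (h : ∀ x, |f x| ≤ C) : Integrable f μ :=
  (memLp_top_of_bound hf.aestronglyMeasurable C (ae_of_all _ (by simpa using h))).integrable le_top

lemma stmt14_sq_integral_le [IsProbabilityMeasure μ] {g : α → ℝ} (hg : Measurable g)
    (C : ℝ) (hb : ∀ x, |g x| ≤ C) :
    (∫ x, |g x| ∂μ) ^ 2 ≤ ∫ x, g x ^ 2 ∂μ := by
  set m := ∫ x, |g x| ∂μ with hm
  have hgi : Integrable (fun x => |g x|) μ :=
    (stmt14_integrable_of_bound hg C hb).abs
  have hg2 : Integrable (fun x => g x ^ 2) μ := by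
    refine stmt14_integrable_of_bound (hg.pow_const 2) (C ^ 2) (fun x => ?_)
    rw [abs_pow]
    exact pow_le_pow_left₀ (abs_nonneg _) (hb x) 2
  have key : 0 ≤ ∫ x, (|g x| - m) ^ 2 ∂μ := integral_nonneg fun x => sq_nonneg _
  have expand : ∫ x, (|g x| - m) ^ 2 ∂μ = ∫ x, g x ^ 2 ∂μ - (2 * m) * m + m ^ 2 := by
    have hfun : (fun x => (|g x| - m) ^ 2) = fun x => g x ^ 2 - (2 * m) * |g x| + m ^ 2 := by
      funext x; rw [← sq_abs (g x)]; ring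
    have hI1 : Integrable (fun x => g x ^ 2 - 2 * m * |g x|) μ := by
      exact hg2.sub (hgi.const_mul (2 * m))
    have hI2 : Integrable (fun x => 2 * m * |g x|) μ := by
      exact hgi.const_mul (2 * m)
    rw [hfun]
    rw [integral_add hI1 (integrable_const _), integral_sub hg2 hI2,
      integral_const_mul, integral_const]
    simp [← hm]
  nlinarith [key, expand]

lemma stmt14_card_bound (N K : ℕ) :
    (((Finset.range N) ×ˢ (Finset.range N)).filter
      (fun p : ℕ × ℕ => max p.1 p.2 - min p.1 p.2 < K)).card ≤ 2 * K * N := by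
  classical
  have h := Finset.card_le_card_of_injOn
    (fun p : ℕ × ℕ => (p.1, if p.2 ≤ p.1 then p.1 - p.2 else K + (p.2 - p.1)))
    (s := ((Finset.range N) ×ˢ (Finset.range N)).filter
      (fun p : ℕ × ℕ => max p.1 p.2 - min p.1 p.2 < K))
    (t := (Finset.range N) ×ˢ (Finset.range (2 * K))) ?_ ?_
  · simpa [Finset.card_product, mul_comm, mul_assoc, mul_left_comm] using h
  · rintro ⟨n, m⟩ hp
    simp only [Finset.coe_filter, Finset.coe_product, Finset.coe_range, Finset.mem_coe,
      Finset.mem_product, Finset.mem_range, Set.mem_prod, Set.mem_Iio, Set.mem_setOf_eq] at hp ⊢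
    obtain ⟨⟨hn, hm⟩, hd⟩ := hp
    refine ⟨hn, ?_⟩
    split_ifs with h' <;> omega
  · rintro ⟨n1, m1⟩ h1 ⟨n2, m2⟩ h2 heq
    simp only [Finset.coe_filter, Finset.mem_product, Finset.mem_range, Set.mem_setOf_eq] at h1 h2
    simp only [Prod.mk.injEq] at heq ⊢
    obtain ⟨he1, he2⟩ := heq
    split_ifs at he2 <;> omega

end StmtAux

set_option maxHeartbeats 2000000 in
/-- Let `ν` be a self-joining of three copies of a measure-preserving automorphism
`T` of `(X, μ)` whose projections onto all three two-dimensional faces equal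
`μ ⊗ μ` (pairwise independence).  If moreover `ν` is invariant under
`Id × Id × T^v` for some `v` such that `T^v` is mixing, then
`ν = μ ⊗ μ ⊗ μ`. -/
theorem stmt14 {X : Type*} [MeasurableSpace X] (μ : Measure X) [IsProbabilityMeasure μ]
    (T : X → X) (hT : MeasurePreserving T μ μ)
    (ν : Measure (X × X × X)) [IsProbabilityMeasure ν]
    (hinv : MeasurePreserving (fun p : X × X × X => (T p.1, T p.2.1, T p.2.2)) ν ν)
    (h12 : ν.map (fun p : X × X × X => (p.1, p.2.1)) = μ.prod μ)
    (h13 : ν.map (fun p : X × X × X => (p.1, p.2.2)) = μ.prod μ)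
    (h23 : ν.map (fun p : X × X × X => (p.2.1, p.2.2)) = μ.prod μ)
    (v : ℕ)
    (hinv2 : MeasurePreserving (fun p : X × X × X => (p.1, p.2.1, T^[v] p.2.2)) ν ν)
    (hmixv : ∀ A B : Set X, MeasurableSet A → MeasurableSet B →
      Tendsto (fun m : ℕ => (μ (A ∩ T^[m * v] ⁻¹' B)).toReal) atTop
        (nhds ((μ A).toReal * (μ B).toReal))) :
    ν = μ.prod (μ.prod μ) := by
  classical
  have hTm : Measurable T := hT.measurable
  have mπ3 : Measurable (fun p : X × X × X => p.2.2) := by fun_prop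
  have mπ12 : Measurable (fun p : X × X × X => (p.1, p.2.1)) := by fun_prop
  have mπ23 : Measurable (fun p : X × X × X => (p.2.1, p.2.2)) := by fun_prop
  have m3 : ν.map (fun p : X × X × X => p.2.2) = μ := by
    have hc : (fun p : X × X × X => p.2.2)
        = Prod.snd ∘ (fun p : X × X × X => (p.2.1, p.2.2)) := rfl
    rw [hc, ← Measure.map_map measurable_snd mπ23, h23, Measure.map_snd_prod,
      measure_univ, one_smul]
  -- bound on toReal of measures
  have htr : ∀ s : Set X, (μ s).toReal ≤ 1 := by
    intro s
    calc (μ s).toReal ≤ (1 : ENNReal).toReal := ENNReal.toReal_mono ENNReal.one_ne_top prob_le_one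
      _ = 1 := by simp
  have htr0 : ∀ s : Set X, 0 ≤ (μ s).toReal := fun s => ENNReal.toReal_nonneg
  -- the indicator function
  set I : Set X → X → ℝ := fun s => s.indicator 1 with hI
  have hIapp : ∀ (s : Set X) (x : X), I s x = if x ∈ s then 1 else 0 := by
    intro s x; simp [hI, Set.indicator_apply]
  have hIbd : ∀ (s : Set X) (x : X), |I s x| ≤ 1 := by
    intro s x; rw [hIapp]; split_ifs <;> norm_num
  have hInn : ∀ (s : Set X) (x : X), 0 ≤ I s x := by
    intro s x; rw [hIapp]; split_ifs <;> norm_num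
  have hIle : ∀ (s : Set X) (x : X), I s x ≤ 1 := by
    intro s x; rw [hIapp]; split_ifs <;> norm_num
  have hImeas : ∀ (s : Set X), MeasurableSet s → Measurable (I s) := by
    intro s hs; exact measurable_const.indicator hs
  have hImul : ∀ (s t : Set X) (x : X), I s x * I t x = I (s ∩ t) x := by
    intro s t x; rw [hIapp, hIapp, hIapp]
    by_cases h1 : x ∈ s <;> by_cases h2 : x ∈ t <;> simp [h1, h2]
  have hIint : ∀ (s : Set X), MeasurableSet s → ∫ x, I s x ∂μ = (μ s).toReal := by
    intro s hs
    have h0 : ∀ x, I s x = s.indicator 1 x := fun x => rfl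
    calc ∫ x, I s x ∂μ = ∫ x, s.indicator 1 x ∂μ := integral_congr_ae (ae_of_all _ h0)
      _ = (μ s).toReal := integral_indicator_one hs
  -- key rectangle identity
  have key : ∀ A B C : Set X, MeasurableSet A → MeasurableSet B → MeasurableSet C →
      (ν (A ×ˢ B ×ˢ C)).toReal = (μ A).toReal * (μ B).toReal * (μ C).toReal := by
    intro A B C hA hB hC
    set a := (μ A).toReal with ha
    set b := (μ B).toReal with hb
    set c := (μ C).toReal with hc
    have ha01 : 0 ≤ a ∧ a ≤ 1 := ⟨htr0 A, htr A⟩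
    have hb01 : 0 ≤ b ∧ b ≤ 1 := ⟨htr0 B, htr B⟩
    have hc01 : 0 ≤ c ∧ c ≤ 1 := ⟨htr0 C, htr C⟩
    -- iterated preimages of C
    set S : ℕ → Set X := fun n => T^[n * v] ⁻¹' C with hS
    have hSmeas : ∀ n, MeasurableSet (S n) := fun n => hC.preimage (hTm.iterate _)
    have hSμ : ∀ n, μ (S n) = μ C := fun n =>
      (hT.iterate (n * v)).measure_preimage hC.nullMeasurableSet
    -- invariance of ν under Id × Id × T^[v]
    have hstep : ∀ s : Set X, MeasurableSet s →
        ν (A ×ˢ B ×ˢ (T^[v] ⁻¹' s)) = ν (A ×ˢ B ×ˢ s) := by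
      intro s hs
      have h1 := hinv2.measure_preimage (hA.prod (hB.prod hs)).nullMeasurableSet
      have h2 : (fun p : X × X × X => (p.1, p.2.1, T^[v] p.2.2)) ⁻¹' (A ×ˢ B ×ˢ s)
          = A ×ˢ B ×ˢ (T^[v] ⁻¹' s) := by
        ext p; simp [Set.mem_prod]
      rw [h2] at h1; exact h1
    have hiter : ∀ n, ν (A ×ˢ B ×ˢ S n) = ν (A ×ˢ B ×ˢ C) := by
      intro n
      induction n with
      | zero => simp [hS]
      | succ n ih =>
        have h1 : S (n + 1) = T^[v] ⁻¹' (S n) := by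
          simp only [hS]
          rw [show (n + 1) * v = n * v + v from by ring, Function.iterate_add]
          rfl
        rw [h1, hstep (S n) (hSmeas n), ih]
    -- integral identities over ν
    have intJ : ∀ (s : Set X), MeasurableSet s →
        ∫ p : X × X × X, I s p.2.2 ∂ν = (μ s).toReal := by
      intro s hs
      have h1 : ∀ p : X × X × X, I s p.2.2
          = ((fun p : X × X × X => p.2.2) ⁻¹' s).indicator 1 p := by
        intro p; rw [hIapp]; simp [Set.indicator_apply]
      calc ∫ p : X × X × X, I s p.2.2 ∂ν
          = ∫ p : X × X × X, ((fun p : X × X × X => p.2.2) ⁻¹' s).indicator 1 p ∂ν :=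
            integral_congr_ae (ae_of_all _ h1)
        _ = (ν ((fun p : X × X × X => p.2.2) ⁻¹' s)).toReal := integral_indicator_one (mπ3 hs)
        _ = (μ s).toReal := by rw [← Measure.map_apply mπ3 hs, m3]
    have intF : ∫ p : X × X × X, I A p.1 * I B p.2.1 ∂ν = a * b := by
      have h1 : ∀ p : X × X × X, I A p.1 * I B p.2.1
          = ((fun p : X × X × X => (p.1, p.2.1)) ⁻¹' (A ×ˢ B)).indicator 1 p := by
        intro p; rw [hIapp, hIapp]
        by_cases hx1 : p.1 ∈ A <;> by_cases hx2 : p.2.1 ∈ B <;>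
          simp [Set.indicator_apply, Set.mem_prod, hx1, hx2]
      calc ∫ p : X × X × X, I A p.1 * I B p.2.1 ∂ν
          = ∫ p : X × X × X, ((fun p : X × X × X => (p.1, p.2.1)) ⁻¹' (A ×ˢ B)).indicator 1 p ∂ν :=
            integral_congr_ae (ae_of_all _ h1)
        _ = (ν ((fun p : X × X × X => (p.1, p.2.1)) ⁻¹' (A ×ˢ B))).toReal :=
            integral_indicator_one (mπ12 (hA.prod hB))
        _ = ((μ.prod μ) (A ×ˢ B)).toReal := by rw [← Measure.map_apply mπ12 (hA.prod hB), h12]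
        _ = a * b := by rw [Measure.prod_prod, ENNReal.toReal_mul]
    have intFJ : ∀ (s : Set X), MeasurableSet s →
        ∫ p : X × X × X, I A p.1 * I B p.2.1 * I s p.2.2 ∂ν = (ν (A ×ˢ B ×ˢ s)).toReal := by
      intro s hs
      have h1 : ∀ p : X × X × X, I A p.1 * I B p.2.1 * I s p.2.2
          = (A ×ˢ B ×ˢ s).indicator 1 p := by
        intro p; rw [hIapp, hIapp, hIapp]
        by_cases hx1 : p.1 ∈ A <;> by_cases hx2 : p.2.1 ∈ B <;> by_cases hx3 : p.2.2 ∈ s <;>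
          simp [Set.indicator_apply, Set.mem_prod, hx1, hx2, hx3]
      calc ∫ p : X × X × X, I A p.1 * I B p.2.1 * I s p.2.2 ∂ν
          = ∫ p : X × X × X, (A ×ˢ B ×ˢ s).indicator 1 p ∂ν :=
            integral_congr_ae (ae_of_all _ h1)
        _ = (ν (A ×ˢ B ×ˢ s)).toReal := integral_indicator_one (hA.prod (hB.prod hs))
    -- measurability helpers
    have hFmeas : Measurable (fun p : X × X × X => I A p.1 * I B p.2.1) := by
      exact ((hImeas A hA).comp measurable_fst).mul
        ((hImeas B hB).comp (measurable_fst.comp measurable_snd))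
    have hJmeas : ∀ (s : Set X), MeasurableSet s →
        Measurable (fun p : X × X × X => I s p.2.2) := fun s hs => (hImeas s hs).comp mπ3
    have hFab : ∀ p : X × X × X, |I A p.1 * I B p.2.1 - a * b| ≤ 1 := by
      intro p
      have h1 := hInn A p.1; have h2 := hIle A p.1
      have h3 := hInn B p.2.1; have h4 := hIle B p.2.1
      rw [abs_le]
      constructor <;> nlinarith [ha01.1, ha01.2, hb01.1, hb01.2]
    -- the per-n identity
    have Dn : ∀ n, ∫ p : X × X × X, (I A p.1 * I B p.2.1 - a * b) * (I (S n) p.2.2 - c) ∂ν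
        = (ν (A ×ˢ B ×ˢ C)).toReal - a * b * c := by
      intro n
      have hint1 : Integrable (fun p : X × X × X => I A p.1 * I B p.2.1 * I (S n) p.2.2) ν := by
        refine stmt14_integrable_of_bound (hFmeas.mul (hJmeas _ (hSmeas n))) 1 fun p => ?_
        rw [abs_mul, abs_mul]
        calc |I A p.1| * |I B p.2.1| * |I (S n) p.2.2| ≤ 1 * 1 * 1 := by
              gcongr <;> first | exact hIbd _ _ | exact abs_nonneg _ |
                exact mul_nonneg (abs_nonneg _) (abs_nonneg _)
          _ = 1 := by ring
      have hint2 : Integrable (fun p : X × X × X => I A p.1 * I B p.2.1) ν := by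
        refine stmt14_integrable_of_bound hFmeas 1 fun p => ?_
        rw [abs_mul]
        calc |I A p.1| * |I B p.2.1| ≤ 1 * 1 := by
              gcongr <;> first | exact hIbd _ _ | exact abs_nonneg _
          _ = 1 := by ring
      have hint3 : Integrable (fun p : X × X × X => I (S n) p.2.2) ν :=
        stmt14_integrable_of_bound (hJmeas _ (hSmeas n)) 1 fun p => hIbd _ _
      have hexp : ∀ p : X × X × X,
          (I A p.1 * I B p.2.1 - a * b) * (I (S n) p.2.2 - c)
          = I A p.1 * I B p.2.1 * I (S n) p.2.2 - (a * b) * I (S n) p.2.2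
            - c * (I A p.1 * I B p.2.1) + a * b * c := by
        intro p; ring
      calc ∫ p : X × X × X, (I A p.1 * I B p.2.1 - a * b) * (I (S n) p.2.2 - c) ∂ν
          = ∫ p : X × X × X, (I A p.1 * I B p.2.1 * I (S n) p.2.2
              - (a * b) * I (S n) p.2.2 - c * (I A p.1 * I B p.2.1) + a * b * c) ∂ν :=
            integral_congr_ae (ae_of_all _ hexp)
        _ = (ν (A ×ˢ B ×ˢ S n)).toReal - a * b * c - c * (a * b) + a * b * c := by
            have hIc : Integrable (fun p : X × X × X => a * b * I (S n) p.2.2) ν := by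
              exact hint3.const_mul _
            have hId : Integrable (fun p : X × X × X => c * (I A p.1 * I B p.2.1)) ν := by
              exact hint2.const_mul _
            have hIa : Integrable (fun p : X × X × X =>
                I A p.1 * I B p.2.1 * I (S n) p.2.2 - a * b * I (S n) p.2.2) ν := by
              exact hint1.sub hIc
            have hIb : Integrable (fun p : X × X × X =>
                I A p.1 * I B p.2.1 * I (S n) p.2.2 - a * b * I (S n) p.2.2
                  - c * (I A p.1 * I B p.2.1)) ν := by
              exact hIa.sub hId
            rw [integral_add hIb (integrable_const _), integral_sub hIa hId,
              integral_sub hint1 hIc,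
              integral_const_mul, integral_const_mul, integral_const, intFJ _ (hSmeas n),
              intJ _ (hSmeas n), intF, hSμ n, ← hc]
            simp
        _ = (ν (A ×ˢ B ×ˢ C)).toReal - a * b * c := by rw [hiter n]; ring
    -- correlation sequence
    set D := (ν (A ×ˢ B ×ˢ C)).toReal - a * b * c with hD
    clear_value D
    set e : ℕ → ℝ := fun k => (μ (C ∩ T^[k * v] ⁻¹' C)).toReal - c * c with he
    have hebd : ∀ k, |e k| ≤ 1 := by
      intro k
      have h1 := htr (C ∩ T^[k * v] ⁻¹' C)
      have h2 := htr0 (C ∩ T^[k * v] ⁻¹' C)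
      rw [he, abs_le]
      constructor <;> simp only <;> nlinarith [hc01.1, hc01.2]
    have hinter : ∀ n m : ℕ, μ (S n ∩ S m) = μ (C ∩ T^[(max n m - min n m) * v] ⁻¹' C) := by
      have base : ∀ n m : ℕ, n ≤ m → μ (S n ∩ S m) = μ (C ∩ T^[(m - n) * v] ⁻¹' C) := by
        intro n m hnm
        have hset : S n ∩ S m = T^[n * v] ⁻¹' (C ∩ T^[(m - n) * v] ⁻¹' C) := by
          ext z
          simp only [hS, Set.mem_inter_iff, Set.mem_preimage]
          have hcomp : T^[(m - n) * v] (T^[n * v] z) = T^[m * v] z := by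
            rw [← Function.iterate_add_apply]
            congr 1
            have : (m - n) * v + n * v = (m - n + n) * v := by ring
            rw [this]
            congr 1
            omega
          rw [hcomp]
        rw [hset]
        exact (hT.iterate (n * v)).measure_preimage
          (hC.inter (hC.preimage (hTm.iterate _))).nullMeasurableSet
      intro n m
      rcases le_total n m with h | h
      · rw [base n m h, max_eq_right h, min_eq_left h]
      · rw [Set.inter_comm, base m n h, max_eq_left h, min_eq_right h]
    -- pairwise integrals over μ
    have pair : ∀ n m : ℕ, ∫ z, (I (S n) z - c) * (I (S m) z - c) ∂μ
        = e (max n m - min n m) := by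
      intro n m
      have hintn : Integrable (I (S n)) μ :=
        stmt14_integrable_of_bound (hImeas _ (hSmeas n)) 1 fun z => hIbd _ _
      have hintm : Integrable (I (S m)) μ :=
        stmt14_integrable_of_bound (hImeas _ (hSmeas m)) 1 fun z => hIbd _ _
      have hintnm : Integrable (I (S n ∩ S m)) μ :=
        stmt14_integrable_of_bound (hImeas _ ((hSmeas n).inter (hSmeas m))) 1 fun z => hIbd _ _
      have hexp : ∀ z, (I (S n) z - c) * (I (S m) z - c)
          = I (S n ∩ S m) z - c * I (S n) z - c * I (S m) z + c * c := by
        intro z; rw [← hImul]; ring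
      calc ∫ z, (I (S n) z - c) * (I (S m) z - c) ∂μ
          = ∫ z, (I (S n ∩ S m) z - c * I (S n) z - c * I (S m) z + c * c) ∂μ :=
            integral_congr_ae (ae_of_all _ hexp)
        _ = (μ (S n ∩ S m)).toReal - c * c - c * c + c * c := by
            have hJc : Integrable (fun z => c * I (S n) z) μ := by exact hintn.const_mul _
            have hJd : Integrable (fun z => c * I (S m) z) μ := by exact hintm.const_mul _
            have hJa : Integrable (fun z => I (S n ∩ S m) z - c * I (S n) z) μ := by
              exact hintnm.sub hJc
            have hJb : Integrable (fun z => I (S n ∩ S m) z - c * I (S n) z - c * I (S m) z) μ := by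
              exact hJa.sub hJd
            rw [integral_add hJb (integrable_const _), integral_sub hJa hJd,
              integral_sub hintnm hJc,
              integral_const_mul, integral_const_mul, integral_const,
              hIint _ ((hSmeas n).inter (hSmeas m)), hIint _ (hSmeas n), hIint _ (hSmeas m),
              hSμ n, hSμ m, ← hc]
            simp
        _ = e (max n m - min n m) := by rw [he, hinter n m]; ring
    -- the main estimate for each N ≥ 1
    have hgN : ∀ N : ℕ, 1 ≤ N → D ^ 2
        ≤ ((N : ℝ)⁻¹) ^ 2 * ∑ n ∈ Finset.range N, ∑ m ∈ Finset.range N,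
            e (max n m - min n m) := by
      intro N hN
      have hNpos : (0 : ℝ) < N := by exact_mod_cast hN
      set g : X → ℝ := fun z => (N : ℝ)⁻¹ * ∑ n ∈ Finset.range N, (I (S n) z - c) with hg
      have hgmeas : Measurable g := by
        apply Measurable.const_mul
        exact Finset.measurable_sum _ fun n _ => (hImeas _ (hSmeas n)).sub measurable_const
      have hhbd : ∀ (n : ℕ) (z : X), |I (S n) z - c| ≤ 1 := by
        intro n z
        have h1 := hInn (S n) z
        have h2 := hIle (S n) z
        rw [abs_le]; constructor <;> [linarith [hc01.2]; linarith [hc01.1]]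
      have hgbd : ∀ z, |g z| ≤ 1 := by
        intro z
        rw [hg]
        simp only
        rw [abs_mul, abs_inv, Nat.abs_cast]
        calc ((N:ℝ))⁻¹ * |∑ n ∈ Finset.range N, (I (S n) z - c)|
            ≤ (N:ℝ)⁻¹ * ∑ n ∈ Finset.range N, (1:ℝ) := by
              gcongr
              refine le_trans (Finset.abs_sum_le_sum_abs _ _) ?_
              exact Finset.sum_le_sum fun n _ => hhbd n z
          _ = 1 := by
              rw [Finset.sum_const, Finset.card_range, nsmul_eq_mul, mul_one]
              field_simp
      -- D as an integral against g
      have hintn : ∀ n : ℕ, Integrable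
          (fun p : X × X × X => (I A p.1 * I B p.2.1 - a * b) * (I (S n) p.2.2 - c)) ν := by
        intro n
        refine stmt14_integrable_of_bound
          ((hFmeas.sub measurable_const).mul ((hJmeas _ (hSmeas n)).sub measurable_const)) 1
          fun p => ?_
        rw [abs_mul]
        calc |I A p.1 * I B p.2.1 - a * b| * |I (S n) p.2.2 - c| ≤ 1 * 1 := by
              gcongr <;> first | exact hFab p | exact hhbd n p.2.2 | exact abs_nonneg _
          _ = 1 := by ring
      have hDeq : D = ∫ p : X × X × X, (I A p.1 * I B p.2.1 - a * b) * g p.2.2 ∂ν := by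
        have hptw : ∀ p : X × X × X,
            (I A p.1 * I B p.2.1 - a * b) * g p.2.2
            = (N : ℝ)⁻¹ * ∑ n ∈ Finset.range N,
                (I A p.1 * I B p.2.1 - a * b) * (I (S n) p.2.2 - c) := by
          intro p
          simp only [hg]
          rw [← Finset.mul_sum]
          ring
        symm
        calc ∫ p : X × X × X, (I A p.1 * I B p.2.1 - a * b) * g p.2.2 ∂ν
            = ∫ p : X × X × X, (N : ℝ)⁻¹ * ∑ n ∈ Finset.range N,
                (I A p.1 * I B p.2.1 - a * b) * (I (S n) p.2.2 - c) ∂ν :=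
              integral_congr_ae (ae_of_all _ hptw)
          _ = (N : ℝ)⁻¹ * ∑ n ∈ Finset.range N, ∫ p : X × X × X,
                (I A p.1 * I B p.2.1 - a * b) * (I (S n) p.2.2 - c) ∂ν := by
              rw [integral_const_mul, integral_finset_sum _ (fun n _ => hintn n)]
          _ = (N : ℝ)⁻¹ * ∑ n ∈ Finset.range N, D := by
              congr 1
              exact Finset.sum_congr rfl fun n _ => Dn n
          _ = D := by
              rw [Finset.sum_const, Finset.card_range, nsmul_eq_mul]
              field_simp
      have hint4 : Integrable
          (fun p : X × X × X => (I A p.1 * I B p.2.1 - a * b) * g p.2.2) ν := by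
        refine stmt14_integrable_of_bound
          ((hFmeas.sub measurable_const).mul (hgmeas.comp mπ3)) 1 fun p => ?_
        rw [abs_mul]
        calc |I A p.1 * I B p.2.1 - a * b| * |g p.2.2| ≤ 1 * 1 :=
              mul_le_mul (hFab p) (hgbd p.2.2) (abs_nonneg _) zero_le_one
          _ = 1 := by ring
      have hint5 : Integrable (fun p : X × X × X => |g p.2.2|) ν :=
        (stmt14_integrable_of_bound (hgmeas.comp mπ3) 1 fun p => hgbd _).abs
      have hDabs : |D| ≤ ∫ z, |g z| ∂μ := by
        rw [hDeq]
        calc |∫ p : X × X × X, (I A p.1 * I B p.2.1 - a * b) * g p.2.2 ∂ν|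
            ≤ ∫ p : X × X × X, |(I A p.1 * I B p.2.1 - a * b) * g p.2.2| ∂ν := by
              simpa only [Real.norm_eq_abs] using norm_integral_le_integral_norm
                (μ := ν) (fun p : X × X × X => (I A p.1 * I B p.2.1 - a * b) * g p.2.2)
          _ ≤ ∫ p : X × X × X, |g p.2.2| ∂ν := by
              refine integral_mono hint4.abs hint5 fun p => ?_
              rw [abs_mul]
              exact mul_le_of_le_one_left (abs_nonneg _) (hFab p)
          _ = ∫ z, |g z| ∂μ := by
              rw [show μ = ν.map (fun p : X × X × X => p.2.2) from m3.symm,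
                integral_map mπ3.aemeasurable hgmeas.abs.aestronglyMeasurable]
      have hDsq : D ^ 2 ≤ ∫ z, g z ^ 2 ∂μ := by
        have h1 : (∫ z, |g z| ∂μ) ^ 2 ≤ ∫ z, g z ^ 2 ∂μ := stmt14_sq_integral_le hgmeas 1 hgbd
        have h2 : |D| ^ 2 ≤ (∫ z, |g z| ∂μ) ^ 2 := pow_le_pow_left₀ (abs_nonneg _) hDabs 2
        calc D ^ 2 = |D| ^ 2 := (sq_abs D).symm
          _ ≤ _ := le_trans h2 h1
      have hpairint : ∀ n m : ℕ,
          Integrable (fun z => (I (S n) z - c) * (I (S m) z - c)) μ := by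
        intro n m
        refine stmt14_integrable_of_bound
          (((hImeas _ (hSmeas n)).sub measurable_const).mul
            ((hImeas _ (hSmeas m)).sub measurable_const)) 1 fun z => ?_
        rw [abs_mul]
        calc |I (S n) z - c| * |I (S m) z - c| ≤ 1 * 1 :=
              mul_le_mul (hhbd n z) (hhbd m z) (abs_nonneg _) zero_le_one
          _ = 1 := by ring
      have hsqeq : ∫ z, g z ^ 2 ∂μ
          = ((N : ℝ)⁻¹) ^ 2 * ∑ n ∈ Finset.range N, ∑ m ∈ Finset.range N,
              e (max n m - min n m) := by
        have hptw2 : ∀ z, g z ^ 2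
            = ((N : ℝ)⁻¹) ^ 2 * ∑ n ∈ Finset.range N, ∑ m ∈ Finset.range N,
                (I (S n) z - c) * (I (S m) z - c) := by
          intro z
          simp only [hg]
          rw [← Finset.sum_mul_sum]
          ring
        calc ∫ z, g z ^ 2 ∂μ
            = ∫ z, ((N : ℝ)⁻¹) ^ 2 * ∑ n ∈ Finset.range N, ∑ m ∈ Finset.range N,
                (I (S n) z - c) * (I (S m) z - c) ∂μ :=
              integral_congr_ae (ae_of_all _ hptw2)
          _ = ((N : ℝ)⁻¹) ^ 2 * ∑ n ∈ Finset.range N, ∫ z, ∑ m ∈ Finset.range N,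
                (I (S n) z - c) * (I (S m) z - c) ∂μ := by
              rw [integral_const_mul,
                integral_finset_sum _ (fun n _ => integrable_finset_sum _ (fun m _ => hpairint n m))]
          _ = ((N : ℝ)⁻¹) ^ 2 * ∑ n ∈ Finset.range N, ∑ m ∈ Finset.range N,
                e (max n m - min n m) := by
              congr 1
              refine Finset.sum_congr rfl fun n _ => ?_
              rw [integral_finset_sum _ (fun m _ => hpairint n m)]
              exact Finset.sum_congr rfl fun m _ => pair n m
      rw [← hsqeq]
      exact hDsq
    -- conclude D = 0
    have he0 : Tendsto e atTop (nhds 0) := by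
      have h1 : Tendsto (fun k : ℕ => (μ (C ∩ T^[k * v] ⁻¹' C)).toReal - c * c) atTop
          (nhds (c * c - c * c)) := (hmixv C C hC hC).sub tendsto_const_nhds
      simpa [he] using h1
    have hfinal : ∀ ε : ℝ, 0 < ε → D ^ 2 ≤ 2 * ε := by
      intro ε hε
      obtain ⟨K, hK⟩ := (Metric.tendsto_atTop.1 he0) ε hε
      obtain ⟨N, hNgt⟩ := exists_nat_gt (max 1 (2 * K / ε))
      have hN1r : (1 : ℝ) < N := lt_of_le_of_lt (le_max_left _ _) hNgt
      have hN1 : 1 ≤ N := by exact_mod_cast hN1r.le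
      have hNpos : (0 : ℝ) < N := lt_trans one_pos hN1r
      have h2K : 2 * (K : ℝ) < N * ε := by
        have h3 := lt_of_le_of_lt (le_max_right 1 (2 * K / ε)) hNgt
        calc 2 * (K : ℝ) = (2 * K / ε) * ε := by field_simp
          _ < N * ε := by exact mul_lt_mul_of_pos_right h3 hε
      have hsumbd : ∑ n ∈ Finset.range N, ∑ m ∈ Finset.range N, e (max n m - min n m)
          ≤ 2 * K * N + N ^ 2 * ε := by
        rw [← Finset.sum_product' (Finset.range N) (Finset.range N)
          (fun n m => e (max n m - min n m))]
        calc ∑ p ∈ Finset.range N ×ˢ Finset.range N, e (max p.1 p.2 - min p.1 p.2)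
            ≤ ∑ p ∈ Finset.range N ×ˢ Finset.range N,
                (if max p.1 p.2 - min p.1 p.2 < K then (1 : ℝ) else ε) := by
              refine Finset.sum_le_sum fun p _ => ?_
              split_ifs with hp
              · exact le_trans (le_abs_self _) (hebd _)
              · have h4 := hK _ (not_lt.mp hp)
                rw [Real.dist_eq, sub_zero] at h4
                exact le_of_lt (lt_of_le_of_lt (le_abs_self _) h4)
          _ = (((Finset.range N ×ˢ Finset.range N).filter
                  (fun p : ℕ × ℕ => max p.1 p.2 - min p.1 p.2 < K)).card : ℝ) * 1
              + (((Finset.range N ×ˢ Finset.range N).filter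
                  (fun p : ℕ × ℕ => ¬(max p.1 p.2 - min p.1 p.2 < K))).card : ℝ) * ε := by
              rw [Finset.sum_ite]
              simp [Finset.sum_const, nsmul_eq_mul]
          _ ≤ 2 * K * N + N ^ 2 * ε := by
              have hc1 : (((Finset.range N ×ˢ Finset.range N).filter
                  (fun p : ℕ × ℕ => max p.1 p.2 - min p.1 p.2 < K)).card : ℝ)
                  ≤ 2 * K * N := by
                exact_mod_cast stmt14_card_bound N K
              have hc2 : (((Finset.range N ×ˢ Finset.range N).filter
                  (fun p : ℕ × ℕ => ¬(max p.1 p.2 - min p.1 p.2 < K))).card : ℝ)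
                  ≤ N ^ 2 := by
                have h5 : ((Finset.range N ×ˢ Finset.range N).filter
                    (fun p : ℕ × ℕ => ¬(max p.1 p.2 - min p.1 p.2 < K))).card
                    ≤ N * N := by
                  refine le_trans (Finset.card_filter_le _ _) ?_
                  simp [Finset.card_product]
                calc (((Finset.range N ×ˢ Finset.range N).filter
                    (fun p : ℕ × ℕ => ¬(max p.1 p.2 - min p.1 p.2 < K))).card : ℝ)
                    ≤ ((N * N : ℕ) : ℝ) := by exact_mod_cast h5
                  _ = N ^ 2 := by push_cast; ring
              have hc3 : (((Finset.range N ×ˢ Finset.range N).filter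
                  (fun p : ℕ × ℕ => ¬(max p.1 p.2 - min p.1 p.2 < K))).card : ℝ) * ε
                  ≤ N ^ 2 * ε := mul_le_mul_of_nonneg_right hc2 hε.le
              nlinarith
      calc D ^ 2 ≤ ((N : ℝ)⁻¹) ^ 2 * ∑ n ∈ Finset.range N, ∑ m ∈ Finset.range N,
              e (max n m - min n m) := hgN N hN1
        _ ≤ ((N : ℝ)⁻¹) ^ 2 * (2 * K * N + N ^ 2 * ε) := by
            refine mul_le_mul_of_nonneg_left hsumbd (by positivity)
        _ = 2 * K / N + ε := by field_simp
        _ ≤ ε + ε := by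
            have h5 : 2 * (K : ℝ) / N ≤ ε := by
              rw [div_le_iff₀ hNpos]
              nlinarith
            linarith
        _ = 2 * ε := by ring
    have hD0 : D = 0 := by
      by_contra h0
      have hpos : 0 < D ^ 2 := by rw [← sq_abs]; exact pow_pos (abs_pos.2 h0) 2
      have h6 := hfinal (D ^ 2 / 4) (by linarith)
      linarith
    have h7 : (ν (A ×ˢ B ×ˢ C)).toReal - a * b * c = 0 := by rw [← hD]; exact hD0
    linarith
  -- pass to ENNReal and extend to all measurable sets
  have keyE : ∀ A B C : Set X, MeasurableSet A → MeasurableSet B → MeasurableSet C →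
      ν (A ×ˢ B ×ˢ C) = μ A * (μ B * μ C) := by
    intro A B C hA hB hC
    have h1 := key A B C hA hB hC
    have hfin : μ A * (μ B * μ C) ≠ ⊤ :=
      ENNReal.mul_ne_top (measure_ne_top μ A)
        (ENNReal.mul_ne_top (measure_ne_top μ B) (measure_ne_top μ C))
    rw [← ENNReal.toReal_eq_toReal_iff' (measure_ne_top ν _) hfin]
    rw [ENNReal.toReal_mul, ENNReal.toReal_mul, h1]
    ring
  refine ext_of_generate_finite
    (image2 (· ×ˢ ·) {s : Set X | MeasurableSet s}
      (image2 (· ×ˢ ·) {s : Set X | MeasurableSet s} {s : Set X | MeasurableSet s})) ?_ ?_ ?_ ?_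
  · exact (generateFrom_eq_prod generateFrom_measurableSet generateFrom_prod
      isCountablySpanning_measurableSet
      (isCountablySpanning_measurableSet.prod isCountablySpanning_measurableSet)).symm
  · exact isPiSystem_measurableSet.prod (isPiSystem_measurableSet.prod isPiSystem_measurableSet)
  · rintro s ⟨A, hA, t, ⟨B, hB, C, hC, rfl⟩, rfl⟩
    rw [keyE A B C hA hB hC, Measure.prod_prod, Measure.prod_prod]
  · simp
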